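/- Let Z be a countable set. For each n ∈ ℕ and z ∈ Z let λ_n(z) > 0 and (for n ≥ 1) μ_n(z) > 0, and set r_0(z) = 1 and r_n(z) = ∏_{k=1}^n (λ_{k-1}(z)/μ_k(z)). For each n ∈ ℕ let τ_n : Z × Z → ℝ satisfy τ_n(z, z') ≥ 0 for z' ≠ z, with (τ_n(z, z'))_{z' ≠ z} summable for each z. Let v : Z → [0, ∞) be such that for every n and z the family (v(z') τ_n(z', z))_{z'≠z} is summable and v(z) Σ_{z' ≠ z} τ_n(z, z') = Σ_{z' ≠ z} v(z') τ_n(z', z). Define η(n, z) = r_n(z) v(z). Then η satisfies the global balance equations of the generator matrix R with off-diagonal entries R[(n,z),(n+1,z)] = λ_n(z), R[(n,z),(n-1,z)] = μ_n(z), R[(n,z),(n,z')] = r_n(z)^{-1} τ_n(z, z') for z' ≠ z, and all other off-diagonal entries zero; namely, for every n ≥ 1 and z ∈ Z: η(n,z)·(λ_n(z) + μ_n(z) + r_n(z)^{-1} Σ_{z'≠z} τ_n(z,z')) = η(n-1,z) λ_{n-1}(z) + η(n+1,z) μ_{n+1}(z) + Σ_{z'≠z} η(n,z') r_n(z')^{-1}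 τ_n(z',z), and for n = 0 and every z ∈ Z: η(0,z)·(λ_0(z) + Σ_{z'≠z} τ_0(z,z')) = η(1,z) μ_1(z) + Σ_{z'≠z} η(0,z') τ_0(z',z). -/

import Mathlib

/-- Global balance equations for the measure `η(n,z) = r_n(z) v(z)` of a
birth-death process in an interactive jump random environment. -/
theorem stmt_1 {Z : Type*} [Countable Z]
    (lam mu : ℕ → Z → ℝ)
    (hlam : ∀ n z, 0 < lam n z) (hmu : ∀ n z, 1 ≤ n → 0 < mu n z)
    (r : ℕ → Z → ℝ)
    (hr : ∀ n z, r n z = ∏ k ∈ Finset.Icc 1 n, lam (k - 1) z / mu k z)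
    (τ : ℕ → Z → Z → ℝ)
    (hτnn : ∀ n z z', z' ≠ z → 0 ≤ τ n z z')
    (hτsum : ∀ n (z : Z), Summable (fun z' : {w : Z // w ≠ z} => τ n z z'))
    (v : Z → ℝ) (hv : ∀ z, 0 ≤ v z)
    (hvsum : ∀ n (z : Z), Summable (fun z' : {w : Z // w ≠ z} => v z' * τ n z' z))
    (hbal : ∀ n (z : Z),
      v z * ∑' z' : {w : Z // w ≠ z}, τ n z z'
        = ∑' z' : {w : Z // w ≠ z}, v z' * τ n z' z)
    (η : ℕ → Z → ℝ) (hη : ∀ n z, η n z = r n z * v z) :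
    (∀ n (z : Z), 1 ≤ n →
      η n z * (lam n z + mu n z + (r n z)⁻¹ * ∑' z' : {w : Z // w ≠ z}, τ n z z')
        = η (n - 1) z * lam (n - 1) z + η (n + 1) z * mu (n + 1) z
          + ∑' z' : {w : Z // w ≠ z}, η n z' * (r n z')⁻¹ * τ n z' z) ∧
    (∀ z : Z,
      η 0 z * (lam 0 z + ∑' z' : {w : Z // w ≠ z}, τ 0 z z')
        = η 1 z * mu 1 z + ∑' z' : {w : Z // w ≠ z}, η 0 z' * τ 0 z' z) := by

  have hrpos : ∀ n z, 0 < r n z := by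
    intro n z
    rw [hr]
    exact Finset.prod_pos fun k hk =>
      div_pos (hlam _ _) (hmu k z (Finset.mem_Icc.mp hk).1)
  have hrsucc : ∀ n z, r (n + 1) z * mu (n + 1) z = r n z * lam n z := by
    intro n z
    have hμ : mu (n + 1) z ≠ 0 := (hmu (n + 1) z (by omega)).ne'
    rw [hr, hr, Finset.prod_Icc_succ_top (by omega : 1 ≤ n + 1), Nat.add_sub_cancel,
      mul_assoc, div_mul_cancel₀ _ hμ]
  have htsum : ∀ n (z : Z),
      (∑' z' : {w : Z // w ≠ z}, η n z' * (r n z')⁻¹ * τ n z' z)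
        = ∑' z' : {w : Z // w ≠ z}, v z' * τ n z' z := by
    intro n z
    refine tsum_congr fun z' => ?_
    rw [hη]
    have : r n z' ≠ 0 := (hrpos n z').ne'
    field_simp
  constructor
  · intro n z hn
    obtain ⟨m, rfl⟩ : ∃ m, n = m + 1 := ⟨n - 1, by omega⟩
    rw [htsum, ← hbal, hη, hη, hη]
    simp only [Nat.add_sub_cancel]
    have h1 := hrsucc m z
    have h2 := hrsucc (m + 1) z
    have hinv : r (m + 1) z * (r (m + 1) z)⁻¹ = 1 := mul_inv_cancel₀ (hrpos _ _).ne'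
    linear_combination v z * h1 - v z * h2
      + (v z * ∑' z' : {w : Z // w ≠ z}, τ (m + 1) z z') * hinv
  · intro z
    have h0 : ∀ w : Z, r 0 w = 1 := fun w => by rw [hr]; simp
    have ht : (∑' z' : {w : Z // w ≠ z}, η 0 z' * τ 0 z' z)
        = ∑' z' : {w : Z // w ≠ z}, v z' * τ 0 z' z :=
      tsum_congr fun z' => by rw [hη, h0, one_mul]
    rw [ht, ← hbal, hη, hη, h0]
    have h1 := hrsucc 0 z
    rw [h0] at h1
    linear_combination (-v z) * h1
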